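/- Soundness of CSMS: every L_CSL-formula derivable in the Hilbert system CSMS is valid in every CSL-preferential model. -/

import Mathlib

/-- Formulas of the language L_CSL: propositional variables, ⊥, negation,
conjunction, and the comparative similarity connective `cls` (A ⇇ B). -/
inductive CSLForm : Type
  | var : ℕ → CSLForm
  | bot : CSLForm
  | neg : CSLForm → CSLForm
  | and : CSLForm → CSLForm → CSLForm
  | cls : CSLForm → CSLForm → CSLForm

namespace CSLForm

def top : CSLForm := neg bot
def or (A B : CSLForm) : CSLForm := neg (and (neg A) (neg B))
def imp (A B : CSLForm) : CSLForm := or (neg A) B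

end CSLForm

/-- A boolean valuation respecting the classical connectives
(⇇-formulas and variables are treated as atoms). -/
def IsBoolVal (v : CSLForm → Bool) : Prop :=
  v .bot = false ∧ (∀ A, v (.neg A) = !v A) ∧ (∀ A B, v (.and A B) = (v A && v B))

/-- Classical tautologies of L_CSL. -/
def CSLTautology (A : CSLForm) : Prop := ∀ v, IsBoolVal v → v A = true

/-- The Hilbert system CSMS. -/
inductive CSMS : CSLForm → Prop
  | taut {A : CSLForm} : CSLTautology A → CSMS A
  | mp {A B : CSLForm} : CSMS (A.imp B) → CSMS A → CSMS B
  | mon {A B : CSLForm} (C : CSLForm) : CSMS (A.imp B) → CSMS ((A.cls C).imp (B.cls C))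
  | ax1 (A B : CSLForm) : CSMS ((A.cls B).neg.or (B.cls A).neg)
  | ax2 (A B C : CSLForm) : CSMS ((A.cls B).imp ((A.cls C).or (C.cls B)))
  | ax3 (A B : CSLForm) : CSMS ((A.and B.neg).imp (A.cls B))
  | ax4 (A B : CSLForm) : CSMS ((A.cls B).imp B.neg)
  | ax5 (A B C : CSLForm) : CSMS (((A.cls B).and (A.cls C)).imp (A.cls (B.or C)))
  | ax6 (A : CSLForm) : CSMS ((A.cls .bot).imp (((A.cls .bot).neg.cls .bot).neg))

/-- Semantic extension of a formula, given preferential relations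
`pref w x y` (meaning x ≺_w y) and a valuation of propositional variables. -/
def prefEval {W : Type} (pref : W → W → W → Prop) (val : ℕ → Set W) :
    CSLForm → Set W
  | .var i => val i
  | .bot => ∅
  | .neg A => (prefEval pref val A)ᶜ
  | .and A B => prefEval pref val A ∩ prefEval pref val B
  | .cls A B =>
      {w | ∃ x ∈ prefEval pref val A, ∀ y ∈ prefEval pref val B, pref w x y}

/-- A CSL-preferential model. -/
structure CSLPrefModel (W : Type) where
  ne : Nonempty W
  pref : W → W → W → Prop
  modular : ∀ w x y z, pref w x y → pref w z y ∨ pref w x z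
  centered : ∀ w x, x = w ∨ pref w w x
  limit : ∀ w (X : Set W), X.Nonempty → {y ∈ X | ∀ z, pref w z y → z ∉ X}.Nonempty
  val : ℕ → Set W

def CSLPrefModel.eval {W : Type} (M : CSLPrefModel W) : CSLForm → Set W :=
  prefEval M.pref M.val

/-- Distance from a point to a set, in ℝ≥0∞ (so that it is ∞ on the empty set). -/
noncomputable def setDist {W : Type} (d : W → W → ℝ) (w : W) (X : Set W) : ENNReal :=
  ⨅ x ∈ X, ENNReal.ofReal (d w x)

/-- A CSL-distance minspace model. -/
structure CSLMinModel (W : Type) where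
  ne : Nonempty W
  dist : W → W → ℝ
  dist_nonneg : ∀ x y, 0 ≤ dist x y
  dist_eq_zero : ∀ x y, dist x y = 0 ↔ x = y
  min_attained : ∀ (w : W) (X : Set W), X.Nonempty → ∃ x ∈ X, ∀ y ∈ X, dist w x ≤ dist w y
  val : ℕ → Set W

noncomputable def CSLMinModel.eval {W : Type} (M : CSLMinModel W) : CSLForm → Set W
  | .var i => M.val i
  | .bot => ∅
  | .neg A => (M.eval A)ᶜ
  | .and A B => M.eval A ∩ M.eval B
  | .cls A B => {w | setDist M.dist w (M.eval A) < setDist M.dist w (M.eval B)}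

/-- Iterated disjunction of a list of formulas. -/
def bigOr : List CSLForm → CSLForm
  | [] => .bot
  | [A] => A
  | A :: B :: rest => A.or (bigOr (B :: rest))

/-- Iterated conjunction of a list of formulas. -/
def bigAnd : List CSLForm → CSLForm
  | [] => .top
  | [A] => A
  | A :: B :: rest => A.and (bigAnd (B :: rest))

/-- Γ is inconsistent wrt CSMS: there are A₁,…,Aₙ ∈ Γ (n ≥ 1) with ⊢ ¬A₁ ⊔ … ⊔ ¬Aₙ. -/
def Inconsistent (Γ : Set CSLForm) : Prop :=
  ∃ L : List CSLForm, L ≠ [] ∧ (∀ A ∈ L, A ∈ Γ) ∧ CSMS (bigOr (L.map .neg))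

def Consistent (Γ : Set CSLForm) : Prop := ¬ Inconsistent Γ

def MaxConsistent (Γ : Set CSLForm) : Prop :=
  Consistent Γ ∧ ∀ A, A ∉ Γ → Inconsistent (insert A Γ)

/-- w^A = {¬B | (A ⇇ B) ∈ w}. -/
def projSet (w : Set CSLForm) (A : CSLForm) : Set CSLForm :=
  {F | ∃ B, F = CSLForm.neg B ∧ (A.cls B) ∈ w}

/-- R(x,y) iff every A ∈ y satisfies (A ⇇ ⊥) ∈ x. -/
def Rrel (x y : Set CSLForm) : Prop := ∀ A, A ∈ y → (A.cls .bot) ∈ x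

/-- The canonical preferential relation: x ≺_w y iff
∃ B ∈ y such that ∀ A ∈ x, (A ⇇ B) ∈ w. -/
def canonPrec (w x y : Set CSLForm) : Prop :=
  ∃ B, B ∈ y ∧ ∀ A, A ∈ x → (A.cls B) ∈ w

section Sound

open Classical

variable {W : Type} (M : CSLPrefModel W)

lemma eval_bot : M.eval .bot = (∅ : Set W) := rfl
lemma eval_neg (A : CSLForm) : M.eval A.neg = (M.eval A)ᶜ := rfl
lemma eval_and (A B : CSLForm) : M.eval (A.and B) = M.eval A ∩ M.eval B := rfl
lemma eval_cls (A B : CSLForm) (w : W) :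
    w ∈ M.eval (A.cls B) ↔ ∃ x ∈ M.eval A, ∀ y ∈ M.eval B, M.pref w x y := Iff.rfl

lemma eval_or (A B : CSLForm) (w : W) :
    w ∈ M.eval (A.or B) ↔ (w ∈ M.eval A ∨ w ∈ M.eval B) := by
  simp [CSLForm.or, eval_neg, eval_and]; tauto

lemma eval_imp (A B : CSLForm) (w : W) :
    w ∈ M.eval (A.imp B) ↔ (w ∈ M.eval A → w ∈ M.eval B) := by
  simp [CSLForm.imp, eval_or, eval_neg]; tauto

/-- No 2-cycles, from the Limit Assumption. -/
lemma pref_asymm (w x y : W) (hxy : M.pref w x y) (hyx : M.pref w y x) : False := by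
  obtain ⟨z, hz, hmin⟩ := M.limit w {x, y} ⟨x, by simp⟩
  rcases hz with rfl | rfl
  · exact hmin y hyx (by simp)
  · exact hmin x hxy (by simp)

theorem CSMS_sound_mem (A : CSLForm) (h : CSMS A) {W : Type} (M : CSLPrefModel W)
    (w : W) : w ∈ M.eval A := by
  induction h generalizing w with
  | @taut A ht =>
      set v : CSLForm → Bool := fun B => decide (w ∈ M.eval B) with hv
      have hbv : IsBoolVal v := by
        refine ⟨by simp [hv, eval_bot], fun A => ?_, fun A B => ?_⟩
        · simp [hv, eval_neg]
        · simp [hv, eval_and]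
      have := ht v hbv
      simpa [hv] using this
  | mp h1 h2 ih1 ih2 => exact (eval_imp M _ _ w).1 (ih1 w) (ih2 w)
  | @mon A B C h1 ih =>
      rw [eval_imp]
      rintro ⟨x, hx, hall⟩
      exact ⟨x, (eval_imp M A B x).1 (ih x) hx, hall⟩
  | ax1 A B =>
      rw [eval_or, eval_neg, eval_neg]
      by_contra hc
      push_neg at hc
      obtain ⟨h1, h2⟩ := hc
      simp only [Set.notMem_compl_iff] at h1 h2
      obtain ⟨x, hx, hxall⟩ := h1
      obtain ⟨y, hy, hyall⟩ := h2
      exact pref_asymm M w x y (hxall y hy) (hyall x hx)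
  | ax2 A B C =>
      rw [eval_imp, eval_or]
      rintro ⟨x, hx, hall⟩
      by_cases hC : ∀ c ∈ M.eval C, M.pref w x c
      · exact Or.inl ⟨x, hx, hC⟩
      · push_neg at hC
        obtain ⟨c, hc, hnc⟩ := hC
        refine Or.inr ⟨c, hc, fun y hy => ?_⟩
        rcases M.modular w x y c (hall y hy) with h | h
        · exact h
        · exact absurd h hnc
  | ax3 A B =>
      rw [eval_imp, eval_and, eval_neg]
      rintro ⟨hA, hB⟩
      refine ⟨w, hA, fun y hy => ?_⟩
      rcases M.centered w y with rfl | h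
      · exact absurd hy hB
      · exact h
  | ax4 A B =>
      rw [eval_imp, eval_neg]
      rintro ⟨x, hx, hall⟩ hB
      have hxw : M.pref w x w := hall w hB
      rcases M.centered w x with heq | h
      · rw [heq] at hxw; exact pref_asymm M w w w hxw hxw
      · exact pref_asymm M w x w hxw h
  | ax5 A B C =>
      rw [eval_imp, eval_and]
      rintro ⟨⟨x, hx, hxall⟩, ⟨y, hy, hyall⟩⟩
      by_cases hC : ∀ c ∈ M.eval C, M.pref w x c
      · refine ⟨x, hx, fun z hz => ?_⟩
        rcases (eval_or M B C z).1 hz with h | h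
        · exact hxall z h
        · exact hC z h
      · push_neg at hC
        obtain ⟨c, hc, hnc⟩ := hC
        have hcB : ∀ b ∈ M.eval B, M.pref w c b := fun b hb => by
          rcases M.modular w x b c (hxall b hb) with h | h
          · exact h
          · exact absurd h hnc
        refine ⟨y, hy, fun z hz => ?_⟩
        rcases (eval_or M B C z).1 hz with h | h
        · rcases M.modular w c z y (hcB z h) with h' | h'
          · exact h'
          · exact absurd h' (fun h'' => pref_asymm M w c y h'' (hyall c hc))
        · exact hyall z h
  | ax6 A =>
      rw [eval_imp, eval_neg]
      rintro ⟨x, hx, -⟩ ⟨z, hz, -⟩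
      have hz' : z ∉ M.eval (A.cls CSLForm.bot) := hz
      exact hz' ⟨x, hx, fun y hy => absurd hy (Set.notMem_empty y)⟩

end Sound

/-- soundness of CSMS with respect to CSL-preferential models. -/
theorem CSMS_sound (A : CSLForm) (h : CSMS A) :
    ∀ (W : Type) (M : CSLPrefModel W), M.eval A = Set.univ := by
  intro W M
  ext w
  simp [CSMS_sound_mem A h M w]
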